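/- Infimum identity for the conjugate truncated quadratic: For every ρ ∈ (0, +∞] and all real numbers a, b ≥ 0, one has inf_{γ>0} (1/γ)(Q_ρ*(γa) + Q_ρ*(b)) = a · min{b, ρ}, where Q_ρ*(κ) = κ²/2 − (|κ| − ρ)₊²/2 and t₊ = max{t, 0} (for ρ = +∞ read Q_∞*(κ) = κ²/2). -/

import Mathlib

open scoped ENNReal

/-- `Q_ρ*(κ) = κ²/2 − (|κ| − ρ)₊²/2` for `ρ ∈ (0, +∞]` (with `(|κ| − ∞)₊ = 0`). -/
noncomputable def Qstar (ρ : ℝ≥0∞) (κ : ℝ) : ℝ :=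
  κ ^ 2 / 2 - ((ENNReal.ofReal |κ| - ρ).toReal) ^ 2 / 2

lemma Qstar_zero (ρ : ℝ≥0∞) : Qstar ρ 0 = 0 := by
  simp [Qstar, zero_tsub]

lemma Qstar_of_le (ρ : ℝ≥0∞) (κ : ℝ) (h : ENNReal.ofReal |κ| ≤ ρ) :
    Qstar ρ κ = κ ^ 2 / 2 := by
  unfold Qstar
  rw [tsub_eq_zero_of_le h]
  simp

lemma Qstar_le_sq (ρ : ℝ≥0∞) (κ : ℝ) : Qstar ρ κ ≤ κ ^ 2 / 2 := by
  unfold Qstar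
  nlinarith [sq_nonneg ((ENNReal.ofReal |κ| - ρ).toReal)]

lemma toReal_sub_eq (ρ : ℝ≥0∞) (hne : ρ ≠ ∞) (x : ℝ) (h : ρ.toReal ≤ x) :
    (ENNReal.ofReal x - ρ).toReal = x - ρ.toReal := by
  have h1 : ENNReal.ofReal x - ρ = ENNReal.ofReal (x - ρ.toReal) := by
    rw [ENNReal.ofReal_sub _ ENNReal.toReal_nonneg, ENNReal.ofReal_toReal hne]
  rw [h1, ENNReal.toReal_ofReal (by linarith)]

lemma Qstar_of_ge (ρ : ℝ≥0∞) (hne : ρ ≠ ∞) (κ : ℝ) (hκ : 0 ≤ κ) (h : ρ.toReal ≤ κ) :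
    Qstar ρ κ = ρ.toReal * κ - ρ.toReal ^ 2 / 2 := by
  unfold Qstar
  rw [abs_of_nonneg hκ, toReal_sub_eq ρ hne κ h]
  ring

lemma Qstar_ge (ρ : ℝ≥0∞) {κ m : ℝ} (hm0 : 0 ≤ m) (hmρ : ENNReal.ofReal m ≤ ρ) :
    κ * m - m ^ 2 / 2 ≤ Qstar ρ κ := by
  rcases le_or_gt (ENNReal.ofReal |κ|) ρ with h | h
  · rw [Qstar_of_le ρ κ h]
    nlinarith [sq_nonneg (κ - m)]
  · have hne : ρ ≠ ∞ := (h.trans_le le_top).ne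
    have hrκ : ρ.toReal ≤ |κ| := by
      have := ENNReal.toReal_mono (by simp) h.le
      rwa [ENNReal.toReal_ofReal (abs_nonneg κ)] at this
    have hmr : m ≤ ρ.toReal := by
      have := ENNReal.toReal_mono hne hmρ
      rwa [ENNReal.toReal_ofReal hm0] at this
    have heq : Qstar ρ κ = ρ.toReal * |κ| - ρ.toReal ^ 2 / 2 := by
      unfold Qstar
      rw [toReal_sub_eq ρ hne |κ| hrκ, ← sq_abs κ]
      ring
    rw [heq]
    nlinarith [sq_nonneg (ρ.toReal - m), mul_nonneg (sub_nonneg.2 hmr) (sub_nonneg.2 hrκ),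
      mul_nonneg hm0 (sub_nonneg.2 (le_abs_self κ))]

/-- **Infimum identity for the conjugate truncated quadratic.** For every `ρ ∈ (0, +∞]`
and all reals `a, b ≥ 0`, `inf_{γ > 0} (1/γ)(Q_ρ*(γa) + Q_ρ*(b))` = a · min{b, ρ}`. -/
theorem inf_identity_conjugate_truncated_quadratic
    (ρ : ℝ≥0∞) (hρ : 0 < ρ) (a b : ℝ) (ha : 0 ≤ a) (hb : 0 ≤ b) :
    (⨅ γ : {γ : ℝ // 0 < γ}, (1 / γ.1) * (Qstar ρ (γ.1 * a) + Qstar ρ b))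
      = a * (min (ENNReal.ofReal b) ρ).toReal := by
  set m := (min (ENNReal.ofReal b) ρ).toReal with hmdef
  have hm0 : 0 ≤ m := ENNReal.toReal_nonneg
  have hmρ : ENNReal.ofReal m ≤ ρ :=
    le_trans (ENNReal.ofReal_toReal_le) (min_le_right _ _)
  have hmb : m ≤ b := by
    have h1 : min (ENNReal.ofReal b) ρ ≤ ENNReal.ofReal b := min_le_left _ _
    have := ENNReal.toReal_mono ENNReal.ofReal_ne_top h1
    rwa [ENNReal.toReal_ofReal hb] at this
  -- lower bound
  have hlow : ∀ γ : {γ : ℝ // 0 < γ},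
      a * m ≤ (1 / γ.1) * (Qstar ρ (γ.1 * a) + Qstar ρ b) := by
    intro ⟨γ, hγ⟩
    have h1 := Qstar_ge ρ (κ := γ * a) hm0 hmρ
    have h2 := Qstar_ge ρ (κ := b) hm0 hmρ
    rw [one_div, inv_mul_eq_div, le_div_iff₀ hγ]
    nlinarith [mul_nonneg hm0 (sub_nonneg.2 hmb)]
  have hbdd : BddBelow (Set.range fun γ : {γ : ℝ // 0 < γ} =>
      (1 / γ.1) * (Qstar ρ (γ.1 * a) + Qstar ρ b)) := by
    refine ⟨a * m, ?_⟩
    rintro x ⟨γ, rfl⟩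
    exact hlow γ
  refine le_antisymm ?_ (le_ciInf hlow)
  refine le_of_forall_pos_le_add fun ε hε => ?_
  have hQb0 : 0 ≤ Qstar ρ b := by
    have := Qstar_ge ρ (κ := b) hm0 hmρ
    nlinarith [mul_nonneg hm0 (sub_nonneg.2 hmb)]
  rcases eq_or_lt_of_le ha with rfl | ha'
  · -- a = 0
    have hγ0 : (0:ℝ) < Qstar ρ b / ε + 1 := by positivity
    have hkey : 1 / (Qstar ρ b / ε + 1) *
        (Qstar ρ ((Qstar ρ b / ε + 1) * 0) + Qstar ρ b) ≤ 0 * m + ε := by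
      rw [mul_zero, Qstar_zero, zero_add, zero_mul, zero_add, one_div, inv_mul_eq_div,
        div_le_iff₀ hγ0]
      have h1 : ε * (Qstar ρ b / ε) = Qstar ρ b := mul_div_cancel₀ _ hε.ne'
      nlinarith
    exact le_trans (ciInf_le hbdd ⟨_, hγ0⟩) hkey
  · rcases le_or_gt (ENNReal.ofReal b) ρ with hbρ | hρb
    · -- m = b
      have hmb' : m = b := by
        rw [hmdef, min_eq_left hbρ, ENNReal.toReal_ofReal hb]
      have hQb : Qstar ρ b = b ^ 2 / 2 := Qstar_of_le ρ b (by rwa [abs_of_nonneg hb])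
      rcases eq_or_lt_of_le hb with rfl | hb'
      · -- b = 0
        have hγ0 : (0:ℝ) < ε / a ^ 2 := by positivity
        have hkey : 1 / (ε / a ^ 2) * (Qstar ρ (ε / a ^ 2 * a) + Qstar ρ 0)
            ≤ a * m + ε := by
          rw [Qstar_zero, add_zero, hmb', mul_zero, zero_add, one_div, inv_mul_eq_div,
            div_le_iff₀ hγ0]
          have hQg := Qstar_le_sq ρ (ε / a ^ 2 * a)
          have h2 : (ε / a ^ 2 * a) ^ 2 = (ε / a ^ 2) * ε := by
            field_simp
          nlinarith [mul_pos hε hγ0]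
        exact le_trans (ciInf_le hbdd ⟨_, hγ0⟩) hkey
      · -- b > 0
        have hγ0 : (0:ℝ) < b / a := by positivity
        have hba : b / a * a = b := div_mul_cancel₀ _ ha'.ne'
        have hkey : 1 / (b / a) * (Qstar ρ (b / a * a) + Qstar ρ b) ≤ a * m + ε := by
          rw [hba, hQb, hmb']
          have heq : 1 / (b / a) * (b ^ 2 / 2 + b ^ 2 / 2) = a * b := by
            field_simp
            ring
          rw [heq]
          linarith
        exact le_trans (ciInf_le hbdd ⟨_, hγ0⟩) hkey
    · -- ρ < ofReal b, m = ρ.toReal =: r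
      have hne : ρ ≠ ∞ := (hρb.trans_le le_top).ne
      set r := ρ.toReal with hrdef
      clear_value r
      have hr0 : 0 < r := hrdef ▸ ENNReal.toReal_pos hρ.ne' hne
      have hrb : r < b := by
        have := ENNReal.toReal_strict_mono ENNReal.ofReal_ne_top hρb
        rw [ENNReal.toReal_ofReal hb] at this
        exact hrdef ▸ this
      have hmr : m = r := by rw [hmdef, min_eq_right hρb.le, ← hrdef]
      have hQb : Qstar ρ b = r * b - r ^ 2 / 2 := by
        rw [hrdef]; exact Qstar_of_ge ρ hne b hb (by rw [← hrdef]; exact hrb.le)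
      set γ0 : ℝ := r / a + r * b / ε with hγ0def
      clear_value γ0
      have hγ0 : (0:ℝ) < γ0 := by rw [hγ0def]; positivity
      have h1 : r / a * a = r := div_mul_cancel₀ _ ha'.ne'
      have hγa : r ≤ γ0 * a := by
        rw [hγ0def, add_mul, h1]
        have h2 : 0 ≤ r * b / ε * a := by positivity
        linarith
      have hQg : Qstar ρ (γ0 * a) = r * (γ0 * a) - r ^ 2 / 2 := by
        rw [hrdef]
        exact Qstar_of_ge ρ hne _ (by positivity) (by rw [← hrdef]; exact hγa)
      have hεγ : r * b ≤ ε * γ0 := by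
        rw [hγ0def, mul_add]
        have h3 : ε * (r * b / ε) = r * b := mul_div_cancel₀ _ hε.ne'
        have h4 : 0 ≤ ε * (r / a) := by positivity
        linarith
      have hkey : 1 / γ0 * (Qstar ρ (γ0 * a) + Qstar ρ b) ≤ a * m + ε := by
        rw [hQg, hQb, hmr, one_div, inv_mul_eq_div, div_le_iff₀ hγ0]
        nlinarith [sq_nonneg r]
      exact le_trans (ciInf_le hbdd ⟨_, hγ0⟩) hkey
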